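/- arXiv:1711.09022 — 4 statements merged into one kernel-verified Lean document; each statement's English description precedes it below -/
import Mathlib

section
/- Let B = {X ∈ ℝ³ : ‖X‖ < r} (r > 0) carry the quadratic response W(X,F) = f(‖X‖²) • (F Fᵀ − 1) for a function f : ℝ → ℝ. Then for X, Y ∈ B there exists a material isomorphism from X to Y if and only if f(‖X‖²) = f(‖Y‖²). -/
open Matrix

/-- `F ∈ GL(3,ℝ)` is a material isomorphism from `X` to `Y` for the
mechanical response `W`: `W (X, G * F) = W (Y, G)` for every `G ∈ GL(3,ℝ)`. -/
def IsMatIso {V : Type*} (W : EuclideanSpace ℝ (Fin 3) → GL (Fin 3) ℝ → V)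
    (X Y : EuclideanSpace ℝ (Fin 3)) (F : GL (Fin 3) ℝ) : Prop :=
  ∀ G : GL (Fin 3) ℝ, W X (G * F) = W Y G

/-- The quadratic mechanical response `W(X,F) = f(‖X‖²) • (F Fᵀ − 1)`. -/
noncomputable def Wq (f : ℝ → ℝ) (X : EuclideanSpace ℝ (Fin 3)) (F : GL (Fin 3) ℝ) :
    Matrix (Fin 3) (Fin 3) ℝ :=
  f (‖X‖ ^ 2) • ((F : Matrix (Fin 3) (Fin 3) ℝ) * (F : Matrix (Fin 3) (Fin 3) ℝ)ᵀ - 1)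

/-- The scalar matrix `2 • 1` as an element of `GL(3,ℝ)`. -/
noncomputable def twoGL : GL (Fin 3) ℝ :=
  ⟨(2 : ℝ) • 1, (2⁻¹ : ℝ) • 1,
    by rw [Matrix.smul_mul, Matrix.mul_smul, one_mul, smul_smul]; norm_num,
    by rw [Matrix.smul_mul, Matrix.mul_smul, one_mul, smul_smul]; norm_num⟩

/-- For the quadratic response on the ball of radius `r`, there is a material
isomorphism from `X` to `Y` if and only if `f(‖X‖²) = f(‖Y‖²)`. -/
theorem matIso_quadratic_iff (r : ℝ) (hr : 0 < r) (f : ℝ → ℝ)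
    (X Y : EuclideanSpace ℝ (Fin 3)) (hX : ‖X‖ < r) (hY : ‖Y‖ < r) :
    (∃ F : GL (Fin 3) ℝ, IsMatIso (Wq f) X Y F) ↔ f (‖X‖ ^ 2) = f (‖Y‖ ^ 2) := by
  constructor
  · rintro ⟨F, h⟩
    set a := f (‖X‖ ^ 2) with ha
    set b := f (‖Y‖ ^ 2) with hb
    set M : Matrix (Fin 3) (Fin 3) ℝ := (F : Matrix (Fin 3) (Fin 3) ℝ) with hM
    have h1 := h 1
    have h2 := h twoGL
    simp only [Wq, one_mul, Units.val_one, Units.val_mul, transpose_one, mul_one,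
      sub_self, smul_zero] at h1 h2
    rw [show (twoGL : Matrix (Fin 3) (Fin 3) ℝ) = (2 : ℝ) • 1 from rfl] at h2
    simp only [Matrix.smul_mul, Matrix.mul_smul, one_mul, mul_one, transpose_smul,
      transpose_one, smul_smul] at h2
    have e1 := congrFun (congrFun h1 0) 0
    have e2 := congrFun (congrFun h2 0) 0
    simp only [Matrix.smul_apply, Matrix.sub_apply, Matrix.one_apply_eq,
      Matrix.zero_apply, smul_eq_mul] at e1 e2
    norm_num at e2
    linear_combination (e2 - 4 * e1) / 3
  · intro heq
    refine ⟨1, fun G => ?_⟩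
    simp [Wq, heq]
end

section
/- Let B = {X ∈ ℝ³ : ‖X‖ < r} (r > 0) carry the quadratic response W(X,F) = f(‖X‖²) • (F Fᵀ − 1) for a function f : ℝ → ℝ. If X, Y ∈ B satisfy f(‖X‖²) = f(‖Y‖²) ≠ 0, then the set of material isomorphisms from X to Y equals exactly the set of orthogonal elements of GL(3,ℝ), i.e. {F ∈ GL(3,ℝ) : F Fᵀ = 1} = O(3). -/
open Matrix

/-- For the quadratic response, if `f(‖X‖²) = f(‖Y‖²) ≠ 0`, then the set of
material isomorphisms from `X` to `Y` is exactly the orthogonal group `O(3)`. -/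
theorem matIso_quadratic_orthogonal (r : ℝ) (hr : 0 < r) (f : ℝ → ℝ)
    (X Y : EuclideanSpace ℝ (Fin 3)) (hX : ‖X‖ < r) (hY : ‖Y‖ < r)
    (hXY : f (‖X‖ ^ 2) = f (‖Y‖ ^ 2)) (hne : f (‖X‖ ^ 2) ≠ 0) :
    {F : GL (Fin 3) ℝ | IsMatIso (Wq f) X Y F} =
      {F : GL (Fin 3) ℝ |
        (F : Matrix (Fin 3) (Fin 3) ℝ) * (F : Matrix (Fin 3) (Fin 3) ℝ)ᵀ = 1} := by
  ext F
  simp only [Set.mem_setOf_eq]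
  constructor
  · intro h
    have h1 := h 1
    simp only [Wq, one_mul, Units.val_one, Matrix.one_mul, Matrix.transpose_one,
      Matrix.mul_one, sub_self, smul_zero, ← hXY] at h1
    have := smul_eq_zero.mp h1
    rcases this with h2 | h2
    · exact absurd h2 hne
    · exact sub_eq_zero.mp h2
  · intro h G
    simp only [Wq, Units.val_mul, Matrix.transpose_mul, ← hXY]
    congr 2
    calc (G : Matrix (Fin 3) (Fin 3) ℝ) * F * ((F : Matrix (Fin 3) (Fin 3) ℝ)ᵀ * (G : Matrix (Fin 3) (Fin 3) ℝ)ᵀ)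
        = (G : Matrix (Fin 3) (Fin 3) ℝ) * ((F : Matrix (Fin 3) (Fin 3) ℝ) * (F : Matrix (Fin 3) (Fin 3) ℝ)ᵀ) * (G : Matrix (Fin 3) (Fin 3) ℝ)ᵀ := by
          rw [Matrix.mul_assoc, Matrix.mul_assoc, Matrix.mul_assoc]
      _ = (G : Matrix (Fin 3) (Fin 3) ℝ) * (G : Matrix (Fin 3) (Fin 3) ℝ)ᵀ := by rw [h]; simp
end

section
/- Let 0 < s < r, let B = {X ∈ ℝ³ : ‖X‖ < r} carry the quadratic response W(X,F) = f(‖X‖²) • (F Fᵀ − 1), and assume f : ℝ → ℝ satisfies: f(t) = 1 for all t ∈ [0, s²], f is strictly monotone on [s², ∞), and f(t) ≠ 0 for all t ∈ [0, ∞). Then two points X, Y ∈ B are materially isomorphic if and only if ‖X‖ = ‖Y‖ or (‖X‖ ≤ s and ‖Y‖ ≤ s). -/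
open Matrix

/-- If `f ≡ 1` on `[0,s²]`, is strictly monotone on `[s²,∞)` and nowhere zero
on `[0,∞)`, then `X, Y` in the ball of radius `r` are materially isomorphic
iff `‖X‖ = ‖Y‖` or both `‖X‖ ≤ s` and `‖Y‖ ≤ s`. -/
theorem matIso_quadratic_locallyConstant (s r : ℝ) (hs : 0 < s) (hsr : s < r)
    (f : ℝ → ℝ)
    (hf1 : ∀ t ∈ Set.Icc (0 : ℝ) (s ^ 2), f t = 1)
    (hf : StrictMonoOn f (Set.Ici (s ^ 2)) ∨ StrictAntiOn f (Set.Ici (s ^ 2)))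
    (hf0 : ∀ t ∈ Set.Ici (0 : ℝ), f t ≠ 0)
    (X Y : EuclideanSpace ℝ (Fin 3)) (hX : ‖X‖ < r) (hY : ‖Y‖ < r) :
    (∃ F : GL (Fin 3) ℝ, IsMatIso (Wq f) X Y F) ↔
      ‖X‖ = ‖Y‖ ∨ (‖X‖ ≤ s ∧ ‖Y‖ ≤ s) := by
  have hX2 : (0:ℝ) ≤ ‖X‖ ^ 2 := sq_nonneg _
  have hY2 : (0:ℝ) ≤ ‖Y‖ ^ 2 := sq_nonneg _
  have hαne : f (‖X‖ ^ 2) ≠ 0 := hf0 _ hX2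
  constructor
  · rintro ⟨F, hF⟩
    -- Step 1 : F Fᵀ = 1
    have h1 := hF 1
    simp only [Wq, one_mul, Units.val_one, transpose_one, mul_one, sub_self, smul_zero] at h1
    have hFFT : (F : Matrix (Fin 3) (Fin 3) ℝ) * (F : Matrix (Fin 3) (Fin 3) ℝ)ᵀ = 1 := by
      rcases smul_eq_zero.mp h1 with h | h
      · exact absurd h hαne
      · exact sub_eq_zero.mp h
    -- Step 2 : f (‖X‖²) = f (‖Y‖²) using G₀ = 2 • 1
    have hG0 : ((2:ℝ) • (1 : Matrix (Fin 3) (Fin 3) ℝ)) * ((2:ℝ)⁻¹ • 1) = 1 := by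
      rw [smul_mul_smul_comm]; norm_num
    have hG0' : ((2:ℝ)⁻¹ • (1 : Matrix (Fin 3) (Fin 3) ℝ)) * ((2:ℝ) • 1) = 1 := by
      rw [smul_mul_smul_comm]; norm_num
    have h2 := hF ⟨(2:ℝ) • 1, (2:ℝ)⁻¹ • 1, hG0, hG0'⟩
    simp only [Wq, Units.val_mul] at h2
    rw [transpose_mul, mul_assoc ((2:ℝ) • (1 : Matrix (Fin 3) (Fin 3) ℝ)),
        ← mul_assoc (F : Matrix (Fin 3) (Fin 3) ℝ), hFFT, one_mul] at h2
    have h3 := congrArg (fun M : Matrix (Fin 3) (Fin 3) ℝ => M 0 0) h2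
    simp [Matrix.mul_apply, Matrix.one_apply, Fin.sum_univ_three] at h3
    have hfeq : f (‖X‖ ^ 2) = f (‖Y‖ ^ 2) := by
      rcases h3 with h | h
      · exact h
      · norm_num at h
    -- Step 3 : translate to norms
    have hfs2 : f (s ^ 2) = 1 := hf1 _ ⟨sq_nonneg _, le_rfl⟩
    by_cases hxs : ‖X‖ ≤ s
    · by_cases hys : ‖Y‖ ≤ s
      · exact Or.inr ⟨hxs, hys⟩
      · exfalso
        push_neg at hys
        have hx1 : f (‖X‖ ^ 2) = 1 :=
          hf1 _ ⟨hX2, pow_le_pow_left₀ (norm_nonneg _) hxs 2⟩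
        have hy2 : s ^ 2 < ‖Y‖ ^ 2 := pow_lt_pow_left₀ hys hs.le (by norm_num)
        rcases hf with hm | hm
        · have := hm (le_refl (s^2) : s^2 ∈ Set.Ici (s^2)) (le_of_lt hy2) hy2
          rw [hfs2, ← hfeq, hx1] at this; exact lt_irrefl _ this
        · have := hm (le_refl (s^2) : s^2 ∈ Set.Ici (s^2)) (le_of_lt hy2) hy2
          rw [hfs2, ← hfeq, hx1] at this; exact lt_irrefl _ this
    · by_cases hys : ‖Y‖ ≤ s
      · exfalso
        push_neg at hxs
        have hy1 : f (‖Y‖ ^ 2) = 1 :=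
          hf1 _ ⟨hY2, pow_le_pow_left₀ (norm_nonneg _) hys 2⟩
        have hx2 : s ^ 2 < ‖X‖ ^ 2 := pow_lt_pow_left₀ hxs hs.le (by norm_num)
        rcases hf with hm | hm
        · have := hm (le_refl (s^2) : s^2 ∈ Set.Ici (s^2)) (le_of_lt hx2) hx2
          rw [hfs2, hfeq, hy1] at this; exact lt_irrefl _ this
        · have := hm (le_refl (s^2) : s^2 ∈ Set.Ici (s^2)) (le_of_lt hx2) hx2
          rw [hfs2, hfeq, hy1] at this; exact lt_irrefl _ this
      · push_neg at hxs hys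
        have hxm : ‖X‖ ^ 2 ∈ Set.Ici (s ^ 2) :=
          le_of_lt (pow_lt_pow_left₀ hxs hs.le (by norm_num))
        have hym : ‖Y‖ ^ 2 ∈ Set.Ici (s ^ 2) :=
          le_of_lt (pow_lt_pow_left₀ hys hs.le (by norm_num))
        have hsq : ‖X‖ ^ 2 = ‖Y‖ ^ 2 := by
          rcases hf with hm | hm
          · exact hm.injOn hxm hym hfeq
          · exact hm.injOn hxm hym hfeq
        left
        nlinarith [norm_nonneg X, norm_nonneg Y]
  · intro h
    have hfeq : f (‖X‖ ^ 2) = f (‖Y‖ ^ 2) := by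
      rcases h with h | ⟨hx, hy⟩
      · rw [h]
      · rw [hf1 _ ⟨hX2, pow_le_pow_left₀ (norm_nonneg _) hx 2⟩,
            hf1 _ ⟨hY2, pow_le_pow_left₀ (norm_nonneg _) hy 2⟩]
    exact ⟨1, fun G => by simp only [Wq, mul_one, hfeq]⟩
end

section
/- Let 0 < s < r, let B = {X ∈ ℝ³ : ‖X‖ < r} carry the quadratic response W(X,F) = f(‖X‖²) • (F Fᵀ − 1), and assume f : ℝ → ℝ satisfies: f(t) = 1 for all t ∈ [0, s²], f is strictly monotone on [s², ∞), and f(t) ≠ 0 for all t ∈ [0, ∞). Then the material groupoid, as a subset of B × B × GL(3,ℝ), is exactly Ω(B) = {(X, Y, F) : X, Y ∈ B, F Fᵀ = 1, and (‖X‖ = ‖Y‖ or (‖X‖ ≤ s and ‖Y‖ ≤ s))}. -/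
open Matrix

noncomputable def G2aux : GL (Fin 3) ℝ :=
  ⟨(2:ℝ) • 1, (2⁻¹:ℝ) • 1, by simp [Matrix.smul_mul, Matrix.mul_smul, smul_smul],
   by simp [Matrix.smul_mul, Matrix.mul_smul, smul_smul]⟩

lemma norm_eq_of_f_eq (s : ℝ) (hs : 0 < s) (f : ℝ → ℝ)
    (hf1 : ∀ t ∈ Set.Icc (0:ℝ) (s^2), f t = 1)
    (hf : StrictMonoOn f (Set.Ici (s^2)) ∨ StrictAntiOn f (Set.Ici (s^2)))
    (x y : ℝ) (hx0 : 0 ≤ x) (hy0 : 0 ≤ y) (h : f (x^2) = f (y^2)) :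
    x = y ∨ (x ≤ s ∧ y ≤ s) := by
  have hinj : Set.InjOn f (Set.Ici (s^2)) := hf.elim StrictMonoOn.injOn StrictAntiOn.injOn
  have hs2 : f (s^2) = 1 := hf1 _ ⟨by positivity, le_refl _⟩
  by_cases hx : x ≤ s
  · by_cases hy : y ≤ s
    · exact Or.inr ⟨hx, hy⟩
    · push_neg at hy
      have hx2 : f (x^2) = 1 := hf1 _ ⟨by positivity, by nlinarith⟩
      have hy2 : y^2 = s^2 :=
        hinj (Set.mem_Ici.mpr (by nlinarith)) (Set.mem_Ici.mpr le_rfl)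
          (by rw [← h, hx2, hs2])
      nlinarith
  · push_neg at hx
    by_cases hy : y ≤ s
    · have hy2 : f (y^2) = 1 := hf1 _ ⟨by positivity, by nlinarith⟩
      have hx2 : x^2 = s^2 :=
        hinj (Set.mem_Ici.mpr (by nlinarith)) (Set.mem_Ici.mpr le_rfl)
          (by rw [h, hy2, hs2])
      nlinarith
    · push_neg at hy
      have hxy : x^2 = y^2 :=
        hinj (Set.mem_Ici.mpr (by nlinarith)) (Set.mem_Ici.mpr (by nlinarith)) h
      left
      nlinarith [sq_nonneg (x - y), sq_nonneg (x + y)]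

/-- If `f ≡ 1` on `[0,s²]`, is strictly monotone on `[s²,∞)` and nowhere zero
on `[0,∞)`, then the material groupoid of the quadratic response is exactly
`{(X,Y,F) : X, Y ∈ B, F Fᵀ = 1, ‖X‖ = ‖Y‖ or (‖X‖ ≤ s and ‖Y‖ ≤ s)}`. -/
theorem matGroupoid_quadratic_locallyConstant (s r : ℝ) (hs : 0 < s) (hsr : s < r)
    (f : ℝ → ℝ)
    (hf1 : ∀ t ∈ Set.Icc (0 : ℝ) (s ^ 2), f t = 1)
    (hf : StrictMonoOn f (Set.Ici (s ^ 2)) ∨ StrictAntiOn f (Set.Ici (s ^ 2)))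
    (hf0 : ∀ t ∈ Set.Ici (0 : ℝ), f t ≠ 0) :
    {p : EuclideanSpace ℝ (Fin 3) × EuclideanSpace ℝ (Fin 3) × GL (Fin 3) ℝ |
        ‖p.1‖ < r ∧ ‖p.2.1‖ < r ∧ IsMatIso (Wq f) p.1 p.2.1 p.2.2} =
      {p : EuclideanSpace ℝ (Fin 3) × EuclideanSpace ℝ (Fin 3) × GL (Fin 3) ℝ |
        ‖p.1‖ < r ∧ ‖p.2.1‖ < r ∧
          (p.2.2 : Matrix (Fin 3) (Fin 3) ℝ) * (p.2.2 : Matrix (Fin 3) (Fin 3) ℝ)ᵀ = 1 ∧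
          (‖p.1‖ = ‖p.2.1‖ ∨ (‖p.1‖ ≤ s ∧ ‖p.2.1‖ ≤ s))} := by
  ext ⟨X, Y, F⟩
  simp only [Set.mem_setOf_eq]
  have ha : f (‖X‖ ^ 2) ≠ 0 := hf0 _ (Set.mem_Ici.mpr (by positivity))
  constructor
  · rintro ⟨hX, hY, hiso⟩
    refine ⟨hX, hY, ?_, ?_⟩
    case _ =>
      have h1 := hiso 1
      simp only [Wq, one_mul, Units.val_one, Matrix.one_mul, Matrix.transpose_one,
        sub_self, smul_zero] at h1
      have := (smul_eq_zero.mp h1).resolve_left ha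
      exact sub_eq_zero.mp this
    case _ =>
      have hF : (F : Matrix (Fin 3) (Fin 3) ℝ) * (F : Matrix (Fin 3) (Fin 3) ℝ)ᵀ = 1 := by
        have h1 := hiso 1
        simp only [Wq, one_mul, Units.val_one, Matrix.one_mul, Matrix.transpose_one,
          sub_self, smul_zero] at h1
        exact sub_eq_zero.mp ((smul_eq_zero.mp h1).resolve_left ha)
      have h2 := hiso G2aux
      have key : (↑(G2aux * F) : Matrix (Fin 3) (Fin 3) ℝ) * (↑(G2aux * F) : Matrix (Fin 3) (Fin 3) ℝ)ᵀ
          = (4:ℝ) • 1 := by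
        rw [Units.val_mul, Matrix.transpose_mul, Matrix.mul_assoc,
          ← Matrix.mul_assoc (F : Matrix (Fin 3) (Fin 3) ℝ), hF, Matrix.one_mul]
        simp [G2aux, Matrix.smul_mul, Matrix.mul_smul, smul_smul]
        norm_num
      have key2 : (↑G2aux : Matrix (Fin 3) (Fin 3) ℝ) * (↑G2aux : Matrix (Fin 3) (Fin 3) ℝ)ᵀ
          = (4:ℝ) • 1 := by
        simp [G2aux, Matrix.smul_mul, Matrix.mul_smul, smul_smul]
        norm_num
      rw [Wq, Wq, key, key2] at h2
      have hab : f (‖X‖ ^ 2) = f (‖Y‖ ^ 2) := by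
        have := congrFun (congrFun h2 0) 0
        simp [Matrix.smul_apply, Matrix.sub_apply, Matrix.one_apply] at this
        exact this.resolve_right (by norm_num)
      exact norm_eq_of_f_eq s hs f hf1 hf ‖X‖ ‖Y‖ (norm_nonneg _) (norm_nonneg _) hab
  · rintro ⟨hX, hY, hF, hnorm⟩
    refine ⟨hX, hY, ?_⟩
    have hab : f (‖X‖ ^ 2) = f (‖Y‖ ^ 2) := by
      rcases hnorm with h | ⟨hx, hy⟩
      · rw [h]
      · rw [hf1 _ ⟨by positivity, by nlinarith [norm_nonneg X]⟩,
          hf1 _ ⟨by positivity, by nlinarith [norm_nonneg Y]⟩]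
    intro G
    have key : (↑(G * F) : Matrix (Fin 3) (Fin 3) ℝ) * (↑(G * F) : Matrix (Fin 3) (Fin 3) ℝ)ᵀ
        = (G : Matrix (Fin 3) (Fin 3) ℝ) * (G : Matrix (Fin 3) (Fin 3) ℝ)ᵀ := by
      rw [Units.val_mul, Matrix.transpose_mul, Matrix.mul_assoc,
        ← Matrix.mul_assoc (F : Matrix (Fin 3) (Fin 3) ℝ), hF, Matrix.one_mul]
    rw [Wq, Wq, key, hab]
end
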